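/- For coprime positive integers m and n, the (m,n)-Dyck path of area 0 has dinv equal to ((m-1)(n-1))/2, i.e., every cell above the path contributes to its dinv. -/

import Mathlib

/-- Area of the `(m,n)`-Dyck path encoded by `f` (`f j` = number of East steps
before the `j`-th North step). -/
def areaF (m n : ℕ) (f : ℕ → ℕ) : ℕ :=
  ∑ j ∈ Finset.range n,
    ((Finset.range m).filter (fun i => f j ≤ i ∧ n * (i + 1) ≤ m * j)).card

/-- Dinv of the `(m,n)`-Dyck path encoded by `f`: the number of cells `(x,y)` above
the path (`x < f y`) such that the starting rank `a` of the East step below the cell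
(the East step in column `x`, starting after `#{j < n : f j ≤ x}` North steps) and
the starting rank `b = m*y - n*f y` of the North step to its right satisfy
`0 ≤ a - b < m + n`. -/
def dinvF (m n : ℕ) (f : ℕ → ℕ) : ℕ :=
  ((Finset.range m ×ˢ Finset.range n).filter (fun c =>
    c.1 < f c.2 ∧
    0 ≤ ((m : ℤ) * ((Finset.range n).filter (fun j => f j ≤ c.1)).card - (n : ℤ) * c.1)
        - ((m : ℤ) * c.2 - (n : ℤ) * f c.2) ∧
    ((m : ℤ) * ((Finset.range n).filter (fun j => f j ≤ c.1)).card - (n : ℤ) * c.1)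
        - ((m : ℤ) * c.2 - (n : ℤ) * f c.2) < (m : ℤ) + n)).card

/-- Ceiling division characterization. -/
lemma ceil_iff' {m A : ℕ} (hm : 0 < m) (hA : 0 < A) (j : ℕ) :
    j < (A + m - 1) / m ↔ m * j < A := by
  rw [Nat.lt_iff_add_one_le, Nat.le_div_iff_mul_le hm, add_one_mul, mul_comm m j]
  omega

/-- For coprime positive `m, n`, the area-0 `(m,n)`-Dyck path has dinv `(m-1)*(n-1)/2`. -/
theorem sweep_stmt11 (m n : ℕ) (hm : 0 < m) (hn : 0 < n) (h : Nat.Coprime m n)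
    (f : ℕ → ℕ)
    (hmono : ∀ j k, j ≤ k → k < n → f j ≤ f k)
    (hfm : ∀ j < n, f j ≤ m)
    (hdyck : ∀ j < n, n * f j ≤ m * j)
    (harea : areaF m n f = 0) :
    dinvF m n f = (m - 1) * (n - 1) / 2 := by
  -- Step 1: from area 0, each `m*j < n*(f j + 1)`.
  have hlt : ∀ j < n, m * j < n * (f j + 1) := by
    intro j hj
    by_contra hcon
    push_neg at hcon
    have hmjn : m * j < m * n := Nat.mul_lt_mul_of_le_of_lt (le_refl m) hj hm
    have hfjm : f j < m := by
      have h1 : n * (f j + 1) < n * m := by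
        calc n * (f j + 1) ≤ m * j := hcon
          _ < m * n := hmjn
          _ = n * m := Nat.mul_comm m n
      have := Nat.lt_of_mul_lt_mul_left h1
      omega
    unfold areaF at harea
    have h0 := (Finset.sum_eq_zero_iff.mp harea) j (Finset.mem_range.mpr hj)
    rw [Finset.card_eq_zero] at h0
    have hmem : f j ∈ (Finset.range m).filter (fun i => f j ≤ i ∧ n * (i + 1) ≤ m * j) := by
      simp only [Finset.mem_filter, Finset.mem_range]
      exact ⟨hfjm, le_refl _, hcon⟩
    rw [h0] at hmem
    exact Finset.notMem_empty _ hmem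
  -- f equals the floor.
  have hfe : ∀ y < n, f y = m * y / n := by
    intro y hy
    have h1 := hdyck y hy
    have h2 := hlt y hy
    refine Nat.le_antisymm ?_ ?_
    · rw [Nat.le_div_iff_mul_le hn, mul_comm]; exact h1
    · have : m * y / n < f y + 1 := by
        rw [Nat.div_lt_iff_lt_mul hn]; nlinarith [h2]
      omega
  -- Step 2: count of North steps before column x.
  have hcard : ∀ x < m, ((Finset.range n).filter (fun j => f j ≤ x)).card
      = (n * (x + 1) + m - 1) / m := by
    intro x hx
    have hApos : 0 < n * (x + 1) := by positivity
    have hAmn : n * (x + 1) ≤ m * n := by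
      calc n * (x + 1) ≤ n * m := Nat.mul_le_mul_left n hx
        _ = m * n := Nat.mul_comm n m
    have hset : (Finset.range n).filter (fun j => f j ≤ x)
        = Finset.range ((n * (x + 1) + m - 1) / m) := by
      ext j
      simp only [Finset.mem_filter, Finset.mem_range, ceil_iff' hm hApos j]
      constructor
      · rintro ⟨hjn, hfj⟩
        calc m * j < n * (f j + 1) := hlt j hjn
          _ ≤ n * (x + 1) := Nat.mul_le_mul_left n (by omega)
      · intro hj
        have hjn : j < n := by
          by_contra hc
          push_neg at hc
          have h1 : m * n ≤ m * j := Nat.mul_le_mul_left m hc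
          omega
        refine ⟨hjn, ?_⟩
        have h1 : n * f j < n * (x + 1) := lt_of_le_of_lt (hdyck j hjn) hj
        have := Nat.lt_of_mul_lt_mul_left h1
        omega
    rw [hset, Finset.card_range]
  -- Step 3: the dinv condition reduces to `x < f y`.
  unfold dinvF
  have hfilt : ((Finset.range m ×ˢ Finset.range n).filter (fun c =>
      c.1 < f c.2 ∧
      0 ≤ ((m : ℤ) * ((Finset.range n).filter (fun j => f j ≤ c.1)).card - (n : ℤ) * c.1)
          - ((m : ℤ) * c.2 - (n : ℤ) * f c.2) ∧
      ((m : ℤ) * ((Finset.range n).filter (fun j => f j ≤ c.1)).card - (n : ℤ) * c.1)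
          - ((m : ℤ) * c.2 - (n : ℤ) * f c.2) < (m : ℤ) + n))
      = (Finset.range m ×ˢ Finset.range n).filter (fun c => c.1 < f c.2) := by
    apply Finset.filter_congr
    rintro ⟨x, y⟩ hc
    simp only [Finset.mem_product, Finset.mem_range] at hc
    obtain ⟨hx, hy⟩ := hc
    constructor
    · exact fun hp => hp.1
    · intro hxy
      refine ⟨hxy, ?_, ?_⟩ <;>
      · set K := (n * (x + 1) + m - 1) / m with hK
        have hApos : 0 < n * (x + 1) := by positivity
        have ha1 : n * (x + 1) ≤ m * K := by
          by_contra hc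
          push_neg at hc
          exact absurd ((ceil_iff' hm hApos K).mpr hc) (lt_irrefl K)
        have hK0 : 0 < K := by
          rw [ceil_iff' hm hApos 0]
          simpa using hApos
        have ha2 : m * K < n * (x + 1) + m := by
          obtain ⟨k, hk⟩ : ∃ k, K = k + 1 := ⟨K - 1, by omega⟩
          have h3 := (ceil_iff' hm hApos k).mp (by omega)
          have h4 : m * K = m * k + m := by rw [hk]; ring
          omega
        have hb1 : (n : ℤ) * f y ≤ (m : ℤ) * y := by exact_mod_cast hdyck y hy
        have hb2 : (m : ℤ) * y < (n : ℤ) * (f y + 1) := by exact_mod_cast hlt y hy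
        have ha1' : (n : ℤ) * (x + 1) ≤ (m : ℤ) * K := by exact_mod_cast ha1
        have ha2' : (m : ℤ) * K < (n : ℤ) * (x + 1) + m := by exact_mod_cast ha2
        simp only [hcard x hx, ← hK]
        push_cast
        linarith
  rw [hfilt]
  -- Step 4: the count of cells above the path.
  have hcount : ((Finset.range m ×ˢ Finset.range n).filter (fun c => c.1 < f c.2)).card
      = ∑ y ∈ Finset.range n, f y := by
    rw [Finset.card_filter, Finset.sum_product_right]
    apply Finset.sum_congr rfl
    intro y hy
    have hfy : f y ≤ m := hfm y (Finset.mem_range.mp hy)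
    have : (Finset.range m).filter (fun x => x < f y) = Finset.range (f y) := by
      ext a
      simp only [Finset.mem_filter, Finset.mem_range]
      omega
    calc (∑ x ∈ Finset.range m, if (x, y).1 < f (x, y).2 then 1 else 0)
        = ((Finset.range m).filter (fun x => x < f y)).card := by
          rw [Finset.card_filter]
      _ = f y := by rw [this, Finset.card_range]
  rw [hcount]
  -- Step 5: the floor sum identity for coprime m, n.
  have hpair : ∀ y, 0 < y → y < n → m * y / n + m * (n - y) / n = m - 1 := by
    intro y hy0 hyn
    have hq : m * y / n < m := by
      rw [Nat.div_lt_iff_lt_mul hn]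
      exact Nat.mul_lt_mul_of_le_of_lt (le_refl m) hyn hm
    set q := m * y / n with hqdef
    set r := m * y % n with hrdef
    have hrn : r < n := Nat.mod_lt _ hn
    have hr0 : r ≠ 0 := by
      intro h0
      have hdvd : n ∣ m * y := Nat.dvd_of_mod_eq_zero h0
      have : n ∣ y := (Nat.Coprime.dvd_of_dvd_mul_left h.symm) hdvd
      have := Nat.le_of_dvd hy0 this
      omega
    have heq : m * y = n * q + r := (Nat.div_add_mod (m * y) n).symm
    obtain ⟨t, ht⟩ : ∃ t, m = q + 1 + t := ⟨m - q - 1, by omega⟩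
    obtain ⟨z, hz⟩ : ∃ z, n = y + z := ⟨n - y, by omega⟩
    have hnz : n - y = z := by omega
    have hmz : m * z = n * t + (n - r) := by
      have e1 : m * (y + z) = n * q + r + m * z := by rw [Nat.mul_add, heq]
      have e2 : m * (y + z) = m * n := by rw [← hz]
      have e3 : m * n = n * q + n + n * t := by rw [ht]; ring
      omega
    have hdz : m * z / n = t := by
      rw [hmz, Nat.mul_add_div hn, Nat.div_eq_of_lt (by omega)]
      omega
    rw [hnz, hdz]
    omega
  have h2S : 2 * (∑ y ∈ Finset.range n, f y) = (m - 1) * (n - 1) := by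
    have hshift : ∑ y ∈ Finset.range n, f y = ∑ j ∈ Finset.range (n - 1), f (j + 1) := by
      obtain ⟨k, hk⟩ : ∃ k, n = k + 1 := ⟨n - 1, by omega⟩
      have hf0 : f 0 = 0 := by
        rw [hfe 0 hn, Nat.mul_zero, Nat.zero_div]
      rw [hk, Finset.sum_range_succ']
      simp [hf0]
    have hrefl : ∑ j ∈ Finset.range (n - 1), f (j + 1)
        = ∑ j ∈ Finset.range (n - 1), f (n - 1 - j) := by
      rw [← Finset.sum_range_reflect (fun j => f (j + 1)) (n - 1)]
      apply Finset.sum_congr rfl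
      intro j hj
      have hj' := Finset.mem_range.mp hj
      congr 1
      omega
    have hterm : ∀ j ∈ Finset.range (n - 1), f (j + 1) + f (n - 1 - j) = m - 1 := by
      intro j hj
      have hj' := Finset.mem_range.mp hj
      have h1 : f (j + 1) = m * (j + 1) / n := hfe (j + 1) (by omega)
      have h2 : f (n - 1 - j) = m * (n - (j + 1)) / n := by
        rw [hfe (n - 1 - j) (by omega)]
        congr 2
        omega
      rw [h1, h2]
      exact hpair (j + 1) (by omega) (by omega)
    calc 2 * (∑ y ∈ Finset.range n, f y)
        = (∑ j ∈ Finset.range (n - 1), f (j + 1))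
          + ∑ j ∈ Finset.range (n - 1), f (n - 1 - j) := by
          rw [hshift, ← hrefl]; ring
      _ = ∑ j ∈ Finset.range (n - 1), (f (j + 1) + f (n - 1 - j)) := by
          rw [Finset.sum_add_distrib]
      _ = ∑ j ∈ Finset.range (n - 1), (m - 1) := Finset.sum_congr rfl hterm
      _ = (n - 1) * (m - 1) := by rw [Finset.sum_const, Finset.card_range, smul_eq_mul]
      _ = (m - 1) * (n - 1) := Nat.mul_comm _ _
  omega
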